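/- Among all power allocations P with P_i ≥ 0 and Σ_i P_i = N, the uniform allocation P_i ≡ 1 is the unique global minimizer of the normalized EISL of the periodic ACF, which equals Nμ₄ / ((μ₄ − 1) + N²/Σ_i P_i²) − 1; the minimum value is Nμ₄/((μ₄ − 1) + N) − 1. -/

import Mathlib

open Complex

/-- The normalized EISL of the periodic ACF as a function of the power allocation:
`(Σ_{k=1}^{N−1} E|r̃_k|²)/E|r̃_0|²` with
`E|r̃_k|² = (μ₄−1)Σ_i P_i² + |Σ_n P_n e^{2πikn/N}|²` and
`E|r̃_0|² = (μ₄−1)Σ_i P_i² + N²`. -/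
noncomputable def nEISL (N : ℕ) (μ4 : ℝ) (P : Fin N → ℝ) : ℝ :=
  (∑ k ∈ Finset.Ico 1 N,
      ((μ4 - 1) * ∑ i : Fin N, P i ^ 2 +
        ‖∑ n : Fin N, ((P n : ℝ) : ℂ) *
          Complex.exp (2 * Real.pi * Complex.I * (k : ℂ) * (((n : ℕ) : ℂ) + 1) / N)‖ ^ 2)) /
    ((μ4 - 1) * ∑ i : Fin N, P i ^ 2 + (N : ℝ) ^ 2)

lemma key_parseval (N : ℕ) (hN : 0 < N) (P : Fin N → ℝ) :
    ∑ k ∈ Finset.range N,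
      ‖∑ n : Fin N, ((P n : ℝ) : ℂ) *
          Complex.exp (2 * Real.pi * Complex.I * (k : ℂ) * (((n : ℕ) : ℂ) + 1) / N)‖ ^ 2
      = N * ∑ i : Fin N, P i ^ 2 := by
  set ζ : ℂ := Complex.exp (2 * Real.pi * Complex.I / N) with hζdef
  have hζ : IsPrimitiveRoot ζ N := Complex.isPrimitiveRoot_exp N hN.ne'
  have hζ0 : ζ ≠ 0 := Complex.exp_ne_zero _
  have hconj : (starRingEnd ℂ) ζ = ζ⁻¹ := by
    rw [hζdef, ← Complex.exp_conj, ← Complex.exp_neg]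
    congr 1
    simp only [map_div₀, map_mul, Complex.conj_I, Complex.conj_ofReal, map_ofNat,
      Complex.conj_natCast]
    ring
  have hterm : ∀ (k : ℕ) (n : Fin N),
      Complex.exp (2 * Real.pi * Complex.I * (k : ℂ) * (((n : ℕ) : ℂ) + 1) / N)
        = (ζ ^ ((n : ℕ) + 1)) ^ k := by
    intro k n
    rw [hζdef, ← Complex.exp_nat_mul, ← Complex.exp_nat_mul]
    congr 1
    push_cast
    ring
  have horth : ∀ n m : Fin N,
      ∑ k ∈ Finset.range N, (ζ ^ ((n : ℕ) + 1) * ζ⁻¹ ^ ((m : ℕ) + 1)) ^ k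
        = if n = m then (N : ℂ) else 0 := by
    intro n m
    by_cases h : n = m
    · subst h
      rw [if_pos rfl]
      have h1 : ζ ^ ((n : ℕ) + 1) * ζ⁻¹ ^ ((n : ℕ) + 1) = 1 := by
        rw [inv_pow, mul_inv_cancel₀ (pow_ne_zero _ hζ0)]
      simp only [h1, one_pow, Finset.sum_const, Finset.card_range, nsmul_eq_mul, mul_one]
    · rw [if_neg h]
      set w : ℂ := ζ ^ ((n : ℕ) + 1) * ζ⁻¹ ^ ((m : ℕ) + 1) with hwdef
      have hw : w = ζ ^ (((n : ℕ) : ℤ) - ((m : ℕ) : ℤ)) := by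
        rw [hwdef, ← zpow_natCast ζ, ← zpow_natCast ζ⁻¹, inv_zpow, ← zpow_neg,
          ← zpow_add₀ hζ0]
        congr 1
        push_cast
        ring
      have hw1 : w ≠ 1 := by
        rw [hw]
        intro hcon
        have hdvd := (hζ.zpow_eq_one_iff_dvd _).mp hcon
        have h1 : (n : ℕ) < N := n.isLt
        have h2 : (m : ℕ) < N := m.isLt
        have h3 : (n : ℕ) ≠ (m : ℕ) := fun hh => h (Fin.ext hh)
        have := Int.eq_zero_of_abs_lt_dvd hdvd (by rw [abs_lt]; omega)
        omega
      have hwN : w ^ N = 1 := by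
        rw [hw, ← zpow_natCast, ← zpow_mul, mul_comm, zpow_mul, zpow_natCast,
          hζ.pow_eq_one, one_zpow]
      rw [geom_sum_eq hw1, hwN]
      simp
  have main : ((∑ k ∈ Finset.range N,
      ‖∑ n : Fin N, ((P n : ℝ) : ℂ) *
          Complex.exp (2 * Real.pi * Complex.I * (k : ℂ) * (((n : ℕ) : ℂ) + 1) / N)‖ ^ 2 : ℝ) : ℂ)
      = ((N * ∑ i : Fin N, P i ^ 2 : ℝ) : ℂ) := by
    rw [Complex.ofReal_sum]
    calc ∑ k ∈ Finset.range N, ((‖∑ n : Fin N, ((P n : ℝ) : ℂ) *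
          Complex.exp (2 * Real.pi * Complex.I * (k : ℂ) * (((n : ℕ) : ℂ) + 1) / N)‖ ^ 2 : ℝ) : ℂ)
        = ∑ k ∈ Finset.range N, ∑ n : Fin N, ∑ m : Fin N,
            ((P n : ℂ) * (P m : ℂ)) * (ζ ^ ((n : ℕ) + 1) * ζ⁻¹ ^ ((m : ℕ) + 1)) ^ k := by
          refine Finset.sum_congr rfl fun k _ => ?_
          have hFs : ∑ n : Fin N, ((P n : ℝ) : ℂ) *
              Complex.exp (2 * Real.pi * Complex.I * (k : ℂ) * (((n : ℕ) : ℂ) + 1) / N)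
              = ∑ n : Fin N, ((P n : ℝ) : ℂ) * (ζ ^ ((n : ℕ) + 1)) ^ k :=
            Finset.sum_congr rfl fun n _ => by rw [hterm]
          rw [hFs, show ((‖∑ n : Fin N, ((P n : ℝ) : ℂ) * (ζ ^ ((n : ℕ) + 1)) ^ k‖ ^ 2 : ℝ) : ℂ)
              = (∑ n : Fin N, ((P n : ℝ) : ℂ) * (ζ ^ ((n : ℕ) + 1)) ^ k) *
                (starRingEnd ℂ) (∑ n : Fin N, ((P n : ℝ) : ℂ) * (ζ ^ ((n : ℕ) + 1)) ^ k) by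
            rw [Complex.mul_conj, Complex.normSq_eq_norm_sq]]
          rw [map_sum, Finset.sum_mul_sum]
          refine Finset.sum_congr rfl fun n _ => Finset.sum_congr rfl fun m _ => ?_
          rw [map_mul, map_pow, map_pow, hconj, Complex.conj_ofReal, mul_pow]
          ring
      _ = ∑ n : Fin N, ∑ m : Fin N,
            ((P n : ℂ) * (P m : ℂ)) * ∑ k ∈ Finset.range N,
              (ζ ^ ((n : ℕ) + 1) * ζ⁻¹ ^ ((m : ℕ) + 1)) ^ k := by
          rw [Finset.sum_comm]
          refine Finset.sum_congr rfl fun n _ => ?_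
          rw [Finset.sum_comm]
          exact Finset.sum_congr rfl fun m _ => by rw [Finset.mul_sum]
      _ = ((N * ∑ i : Fin N, P i ^ 2 : ℝ) : ℂ) := by
          push_cast
          simp only [horth, mul_ite, mul_zero, Finset.sum_ite_eq, Finset.mem_univ, if_true]
          rw [Finset.mul_sum]
          exact Finset.sum_congr rfl fun n _ => by ring
  exact_mod_cast main

lemma nEISL_eq (N : ℕ) (hN : 0 < N) (μ4 : ℝ) (hμ4 : 1 ≤ μ4) (P : Fin N → ℝ)
    (hsum : ∑ i : Fin N, P i = N) :
    nEISL N μ4 P = (N : ℝ) * μ4 / ((μ4 - 1) + (N : ℝ) ^ 2 / ∑ i : Fin N, P i ^ 2) - 1 := by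
  have hkey : ∑ i : Fin N, (P i - 1) ^ 2 = (∑ i : Fin N, P i ^ 2) - N := by
    have h1 : ∀ i ∈ Finset.univ, (P i - 1) ^ 2 = P i ^ 2 - 2 * P i + 1 := fun i _ => by ring
    rw [Finset.sum_congr rfl h1, Finset.sum_add_distrib, Finset.sum_sub_distrib,
      ← Finset.mul_sum, hsum]
    simp [Finset.card_univ]
    ring
  have hSge : (N : ℝ) ≤ ∑ i : Fin N, P i ^ 2 := by
    have := Finset.sum_nonneg (fun i (_ : i ∈ Finset.univ) => sq_nonneg (P i - 1))
    rw [hkey] at this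
    linarith
  set S := ∑ i : Fin N, P i ^ 2 with hSdef
  have hNpos : (0 : ℝ) < N := by exact_mod_cast hN
  have hSpos : 0 < S := lt_of_lt_of_le hNpos hSge
  have hDpos : 0 < (μ4 - 1) * S + (N : ℝ) ^ 2 :=
    add_pos_of_nonneg_of_pos (mul_nonneg (by linarith) hSpos.le) (by positivity)
  have hdpos : 0 < (μ4 - 1) + (N : ℝ) ^ 2 / S :=
    add_pos_of_nonneg_of_pos (by linarith) (by positivity)
  -- split off the k = 0 term of the Parseval sum
  have hins : Finset.range N = insert 0 (Finset.Ico 1 N) := by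
    ext x
    simp only [Finset.mem_range, Finset.mem_insert, Finset.mem_Ico]
    omega
  have h0not : 0 ∉ Finset.Ico 1 N := by simp
  have hterm0 : ‖∑ n : Fin N, ((P n : ℝ) : ℂ) *
      Complex.exp (2 * Real.pi * Complex.I * ((0 : ℕ) : ℂ) * (((n : ℕ) : ℂ) + 1) / N)‖ ^ 2
      = (N : ℝ) ^ 2 := by
    have : ∀ n : Fin N, ((P n : ℝ) : ℂ) *
        Complex.exp (2 * Real.pi * Complex.I * ((0 : ℕ) : ℂ) * (((n : ℕ) : ℂ) + 1) / N)
        = ((P n : ℝ) : ℂ) := by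
      intro n
      norm_num
    rw [Finset.sum_congr rfl fun n _ => this n, ← Complex.ofReal_sum, hsum]
    simp [_root_.abs_of_nonneg hNpos.le]
  have hIco : ∑ k ∈ Finset.Ico 1 N,
      ‖∑ n : Fin N, ((P n : ℝ) : ℂ) *
          Complex.exp (2 * Real.pi * Complex.I * (k : ℂ) * (((n : ℕ) : ℂ) + 1) / N)‖ ^ 2
      = N * S - (N : ℝ) ^ 2 := by
    have hp := key_parseval N hN P
    rw [hins, Finset.sum_insert h0not, hterm0] at hp
    linarith
  have hcard : ((Finset.Ico 1 N).card : ℝ) = (N : ℝ) - 1 := by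
    rw [Nat.card_Ico]
    have : (1 : ℕ) ≤ N := hN
    push_cast [Nat.cast_sub this]
    ring
  unfold nEISL
  rw [Finset.sum_add_distrib, Finset.sum_const, hIco, ← hSdef, nsmul_eq_mul, hcard]
  rw [div_eq_iff (ne_of_gt hDpos)]
  have hd2 : (μ4 - 1) + (N : ℝ) ^ 2 / S ≠ 0 := ne_of_gt hdpos
  field_simp
  ring

/-- Among all power allocations `P ≥ 0` with `Σ P_i = N`, the uniform allocation `P ≡ 1`
is the unique global minimizer of the normalized EISL of the P-ACF, which equals
`Nμ₄/((μ₄−1) + N²/Σ_i P_i²) − 1`; the minimum value is `Nμ₄/((μ₄−1)+N) − 1`. -/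
theorem uniform_pa_minimizes_nEISL (N : ℕ) (hN : 0 < N) (μ4 : ℝ) (hμ4 : 1 ≤ μ4)
    (P : Fin N → ℝ) (hP : ∀ i, 0 ≤ P i) (hsum : ∑ i : Fin N, P i = N) :
    nEISL N μ4 P
        = (N : ℝ) * μ4 / ((μ4 - 1) + (N : ℝ) ^ 2 / ∑ i : Fin N, P i ^ 2) - 1 ∧
      nEISL N μ4 (fun _ => 1) ≤ nEISL N μ4 P ∧
      ((nEISL N μ4 P = nEISL N μ4 (fun _ => 1)) ↔ ∀ i, P i = 1) ∧
      nEISL N μ4 (fun _ => 1) = (N : ℝ) * μ4 / ((μ4 - 1) + N) - 1 := by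
  have hNpos : (0 : ℝ) < N := by exact_mod_cast hN
  have hsum1 : ∑ _i : Fin N, (1 : ℝ) = N := by simp
  have h1 := nEISL_eq N hN μ4 hμ4 P hsum
  have hu0 := nEISL_eq N hN μ4 hμ4 (fun _ => 1) hsum1
  have hsq1 : ∑ _i : Fin N, (1 : ℝ) ^ 2 = N := by simp
  have hNN : (N : ℝ) ^ 2 / (N : ℝ) = N := by
    rw [sq, mul_div_assoc, div_self hNpos.ne', mul_one]
  have hu : nEISL N μ4 (fun _ => 1) = (N : ℝ) * μ4 / ((μ4 - 1) + N) - 1 := by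
    rw [hu0, hsq1, hNN]
  -- S and its properties
  have hkey : ∑ i : Fin N, (P i - 1) ^ 2 = (∑ i : Fin N, P i ^ 2) - N := by
    have ha : ∀ i ∈ Finset.univ, (P i - 1) ^ 2 = P i ^ 2 - 2 * P i + 1 := fun i _ => by ring
    rw [Finset.sum_congr rfl ha, Finset.sum_add_distrib, Finset.sum_sub_distrib,
      ← Finset.mul_sum, hsum]
    simp [Finset.card_univ]
    ring
  have hSge : (N : ℝ) ≤ ∑ i : Fin N, P i ^ 2 := by
    have := Finset.sum_nonneg (fun i (_ : i ∈ Finset.univ) => sq_nonneg (P i - 1))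
    rw [hkey] at this
    linarith
  set S := ∑ i : Fin N, P i ^ 2 with hSdef
  have hSpos : 0 < S := lt_of_lt_of_le hNpos hSge
  have hd1 : 0 < (μ4 - 1) + (N : ℝ) := by linarith
  have hd2 : 0 < (μ4 - 1) + (N : ℝ) ^ 2 / S :=
    add_pos_of_nonneg_of_pos (by linarith) (by positivity)
  have hdle : (N : ℝ) ^ 2 / S ≤ N := by
    rw [div_le_iff₀ hSpos]
    nlinarith
  have hNμ : 0 < (N : ℝ) * μ4 := by nlinarith
  refine ⟨h1, ?_, ?_, hu⟩
  · rw [h1, hu]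
    have : (N : ℝ) * μ4 / ((μ4 - 1) + N) ≤ (N : ℝ) * μ4 / ((μ4 - 1) + (N : ℝ) ^ 2 / S) := by
      apply div_le_div_of_nonneg_left hNμ.le hd2
      linarith
    linarith
  · constructor
    · intro heq
      rw [h1, hu] at heq
      have heq2 : (N : ℝ) * μ4 / ((μ4 - 1) + (N : ℝ) ^ 2 / S)
          = (N : ℝ) * μ4 / ((μ4 - 1) + N) := by linarith
      have hden : (μ4 - 1) + (N : ℝ) ^ 2 / S = (μ4 - 1) + N := by
        have hinv : ((μ4 - 1) + (N : ℝ) ^ 2 / S)⁻¹ = ((μ4 - 1) + (N : ℝ))⁻¹ := by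
          apply mul_left_cancel₀ hNμ.ne'
          rw [← div_eq_mul_inv, ← div_eq_mul_inv]
          exact heq2
        exact inv_injective hinv
      have hsq : (N : ℝ) ^ 2 / S = N := by linarith
      have hSN : S = N := by
        rw [div_eq_iff hSpos.ne'] at hsq
        have := hsq
        nlinarith
      have hzero : ∑ i : Fin N, (P i - 1) ^ 2 = 0 := by
        rw [hkey, hSN]
        ring
      intro i
      have := (Finset.sum_eq_zero_iff_of_nonneg
        (fun j (_ : j ∈ Finset.univ) => sq_nonneg (P j - 1))).mp hzero i (Finset.mem_univ i)
      have h0 : P i - 1 = 0 := by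
        exact pow_eq_zero_iff (by norm_num) |>.mp this
      linarith
    · intro h
      have : P = fun _ => 1 := funext h
      rw [this]
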